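/- The set {A ∈ M₂(ℝ) : tr A ≠ 0 or det A < 0}, i.e. the complement in the space of 2×2 real matrices of the closed set {A : tr A = 0 and det A ≥ 0}, equipped with the subspace topology from M₂(ℝ) ≅ ℝ⁴, is homeomorphic to ℝ × (ℝ³ \ {0}). -/

import Mathlib

noncomputable section

namespace Stmt19

/-- The larger root of `ξ² - (ρ - c - |t|) ξ - ρ|t| = 0`. -/
def sc (t ρ c : ℝ) : ℝ :=
  (ρ - c - |t| + Real.sqrt ((ρ - c - |t|) ^ 2 + 4 * ρ * |t|)) / 2

lemma D_nonneg (t ρ c : ℝ) (hρ : 0 ≤ ρ) :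
    0 ≤ (ρ - c - |t|) ^ 2 + 4 * ρ * |t| := by
  have ht := abs_nonneg t
  nlinarith [sq_nonneg (ρ - c - |t|)]

lemma sqrt_ge (t ρ c : ℝ) (hρ : 0 ≤ ρ) :
    abs (ρ - c - |t|) ≤ Real.sqrt ((ρ - c - |t|) ^ 2 + 4 * ρ * |t|) := by
  rw [← Real.sqrt_sq_eq_abs]
  apply Real.sqrt_le_sqrt
  have ht := abs_nonneg t
  nlinarith

lemma sc_nonneg (t ρ c : ℝ) (hρ : 0 ≤ ρ) : 0 ≤ sc t ρ c := by
  have h := sqrt_ge t ρ c hρ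
  have h2 := neg_abs_le (ρ - c - |t|)
  unfold sc; linarith

lemma sc_lb (t ρ c : ℝ) (hρ : 0 ≤ ρ) : ρ - c - |t| ≤ sc t ρ c := by
  have h := sqrt_ge t ρ c hρ
  have h2 := le_abs_self (ρ - c - |t|)
  unfold sc; linarith

lemma sc_quad (t ρ c : ℝ) (hρ : 0 ≤ ρ) :
    sc t ρ c * (sc t ρ c + |t| + c) = ρ * (sc t ρ c + |t|) := by
  have h : (Real.sqrt ((ρ - c - |t|) ^ 2 + 4 * ρ * |t|)) ^ 2
      = (ρ - c - |t|) ^ 2 + 4 * ρ * |t| := Real.sq_sqrt (D_nonneg t ρ c hρ)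
  unfold sc
  nlinarith [h]

lemma sc_eq (t ρ c s₀ : ℝ) (hs : 0 ≤ s₀)
    (hquad : s₀ * (s₀ + |t| + c) = ρ * (s₀ + |t|))
    (hle : ρ ≤ s₀ + c) : sc t ρ c = s₀ := by
  have key : (ρ - c - |t|) ^ 2 + 4 * ρ * |t| = (2 * s₀ - (ρ - c - |t|)) ^ 2 := by
    nlinarith [hquad]
  have h2 : 0 ≤ 2 * s₀ - (ρ - c - |t|) := by
    have := abs_nonneg t; linarith
  rw [sc, key, Real.sqrt_sq h2]; ring


/-! Coordinates on 2×2 matrices. -/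

def T2 (A : Matrix (Fin 2) (Fin 2) ℝ) : ℝ := A 0 0 + A 1 1
def U2 (A : Matrix (Fin 2) (Fin 2) ℝ) : ℝ := (A 0 0 - A 1 1) / 2
def V2 (A : Matrix (Fin 2) (Fin 2) ℝ) : ℝ := (A 0 1 + A 1 0) / 2
def W2 (A : Matrix (Fin 2) (Fin 2) ℝ) : ℝ := (A 0 1 - A 1 0) / 2
def R2 (A : Matrix (Fin 2) (Fin 2) ℝ) : ℝ := Real.sqrt (U2 A ^ 2 + V2 A ^ 2)
def S2 (A : Matrix (Fin 2) (Fin 2) ℝ) : ℝ := sc (T2 A) (R2 A) |W2 A|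
def Sig (A : Matrix (Fin 2) (Fin 2) ℝ) : ℝ :=
  (S2 A + |T2 A|) / (S2 A + |T2 A| + |W2 A|)

def Sset : Set (Matrix (Fin 2) (Fin 2) ℝ) := {A | A.trace ≠ 0 ∨ A.det < 0}

lemma trace_eq (A : Matrix (Fin 2) (Fin 2) ℝ) : A.trace = T2 A :=
  Matrix.trace_fin_two A

lemma det_eq (A : Matrix (Fin 2) (Fin 2) ℝ) :
    A.det = T2 A ^ 2 / 4 + W2 A ^ 2 - U2 A ^ 2 - V2 A ^ 2 := by
  rw [Matrix.det_fin_two]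
  unfold T2 U2 V2 W2
  ring

lemma mem_iff (A : Matrix (Fin 2) (Fin 2) ℝ) :
    A ∈ Sset ↔ (T2 A ≠ 0 ∨ |W2 A| < R2 A) := by
  have habs : |W2 A| < R2 A ↔ W2 A ^ 2 < U2 A ^ 2 + V2 A ^ 2 := by
    rw [R2, Real.lt_sqrt (abs_nonneg _), sq_abs]
  constructor
  · rintro (h | h)
    · rw [trace_eq] at h; exact Or.inl h
    · rw [det_eq] at h
      by_cases ht : T2 A = 0
      · right; rw [habs]; rw [ht] at h; nlinarith
      · exact Or.inl ht
  · rintro (h | h)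
    · left; rw [trace_eq]; exact h
    · by_cases ht : T2 A = 0
      · right; rw [det_eq, ht]; rw [habs] at h; nlinarith
      · left; rw [trace_eq]; exact ht

lemma key {A : Matrix (Fin 2) (Fin 2) ℝ} (hA : A ∈ Sset) :
    0 < S2 A + |T2 A| := by
  rcases (mem_iff A).1 hA with h | h
  · have h1 := sc_nonneg (T2 A) (R2 A) |W2 A| (Real.sqrt_nonneg _)
    have h2 : 0 < |T2 A| := abs_pos.2 h
    rw [S2]; linarith
  · have h1 := sc_lb (T2 A) (R2 A) |W2 A| (Real.sqrt_nonneg _)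
    rw [S2]; linarith

lemma keyden {A : Matrix (Fin 2) (Fin 2) ℝ} (hA : A ∈ Sset) :
    0 < S2 A + |T2 A| + |W2 A| := by
  have := key hA; have := abs_nonneg (W2 A); linarith

lemma sig_nonneg {A : Matrix (Fin 2) (Fin 2) ℝ} (hA : A ∈ Sset) :
    0 ≤ Sig A := div_nonneg (le_of_lt (key hA)) (le_of_lt (keyden hA))

lemma sig_rho {A : Matrix (Fin 2) (Fin 2) ℝ} (hA : A ∈ Sset) :
    Sig A * R2 A = S2 A := by
  have hq := sc_quad (T2 A) (R2 A) |W2 A| (Real.sqrt_nonneg _)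
  have hd := keyden hA
  rw [Sig, div_mul_eq_mul_div, div_eq_iff (ne_of_gt hd)]
  rw [S2] at *
  linarith [hq]

lemma fwd_mem {A : Matrix (Fin 2) (Fin 2) ℝ} (hA : A ∈ Sset) :
    ![T2 A, Sig A * U2 A, Sig A * V2 A] ≠ 0 := by
  by_cases ht : T2 A = 0
  · have hw : |W2 A| < R2 A := by
      rcases (mem_iff A).1 hA with h | h
      · exact absurd ht h
      · exact h
    have hR : 0 < R2 A := lt_of_le_of_lt (abs_nonneg _) hw
    have hσ : 0 < Sig A := div_pos (key hA) (keyden hA)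
    have huv : 0 < U2 A ^ 2 + V2 A ^ 2 := Real.sqrt_pos.1 hR
    intro h0
    have h1 : Sig A * U2 A = 0 := by
      have := congrFun h0 1; simpa using this
    have h2 : Sig A * V2 A = 0 := by
      have := congrFun h0 2; simpa using this
    have hu : U2 A = 0 := by
      rcases mul_eq_zero.1 h1 with h | h
      · exact absurd h (ne_of_gt hσ)
      · exact h
    have hv : V2 A = 0 := by
      rcases mul_eq_zero.1 h2 with h | h
      · exact absurd h (ne_of_gt hσ)
      · exact h
    rw [hu, hv] at huv; norm_num at huv
  · intro h0
    apply ht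
    have := congrFun h0 0; simpa using this

/-! Backward map. -/

def s0 (x : Fin 3 → ℝ) : ℝ := Real.sqrt (x 1 ^ 2 + x 2 ^ 2)

def mu (w : ℝ) (x : Fin 3 → ℝ) : ℝ := (s0 x + |x 0| + |w|) / (s0 x + |x 0|)

lemma keyB {x : Fin 3 → ℝ} (hx : x ≠ 0) : 0 < s0 x + |x 0| := by
  by_cases h : x 0 = 0
  · have hpq : x 1 ≠ 0 ∨ x 2 ≠ 0 := by
      by_contra hc
      push_neg at hc
      apply hx
      funext i
      fin_cases i
      · exact h
      · exact hc.1
      · exact hc.2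
    have hs : 0 < s0 x := by
      rw [s0, Real.sqrt_pos]
      rcases hpq with h1 | h1 <;> nlinarith [sq_nonneg (x 1), sq_nonneg (x 2), pow_pos (abs_pos.2 h1) 2, sq_abs (x 1), sq_abs (x 2)]
    have := abs_nonneg (x 0); linarith
  · have := Real.sqrt_nonneg (x 1 ^ 2 + x 2 ^ 2)
    have h2 : 0 < |x 0| := abs_pos.2 h
    rw [s0]; linarith

def bwdM (w : ℝ) (x : Fin 3 → ℝ) : Matrix (Fin 2) (Fin 2) ℝ :=
  !![x 0 / 2 + mu w x * x 1, mu w x * x 2 + w;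
     mu w x * x 2 - w, x 0 / 2 - mu w x * x 1]

lemma bwdM_T2 (w : ℝ) (x : Fin 3 → ℝ) : T2 (bwdM w x) = x 0 := by
  simp [T2, bwdM]

lemma bwdM_U2 (w : ℝ) (x : Fin 3 → ℝ) : U2 (bwdM w x) = mu w x * x 1 := by
  simp [U2, bwdM]

lemma bwdM_V2 (w : ℝ) (x : Fin 3 → ℝ) : V2 (bwdM w x) = mu w x * x 2 := by
  simp [V2, bwdM]

lemma bwdM_W2 (w : ℝ) (x : Fin 3 → ℝ) : W2 (bwdM w x) = w := by
  simp [W2, bwdM]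

lemma mu_nonneg {w : ℝ} {x : Fin 3 → ℝ} (hx : x ≠ 0) : 0 ≤ mu w x := by
  apply div_nonneg
  · have := Real.sqrt_nonneg (x 1 ^ 2 + x 2 ^ 2)
    have := abs_nonneg (x 0); have := abs_nonneg w
    rw [s0]; linarith
  · exact le_of_lt (keyB hx)

lemma bwdM_R2 {w : ℝ} {x : Fin 3 → ℝ} (hx : x ≠ 0) :
    R2 (bwdM w x) = mu w x * s0 x := by
  rw [R2, bwdM_U2, bwdM_V2]
  have h1 : (mu w x * x 1) ^ 2 + (mu w x * x 2) ^ 2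
      = mu w x ^ 2 * (x 1 ^ 2 + x 2 ^ 2) := by ring
  rw [h1, Real.sqrt_mul (sq_nonneg _), Real.sqrt_sq (mu_nonneg hx), s0]

lemma bwd_mem {w : ℝ} {x : Fin 3 → ℝ} (hx : x ≠ 0) : bwdM w x ∈ Sset := by
  rw [mem_iff, bwdM_T2, bwdM_W2]
  by_cases h : x 0 = 0
  · right
    rw [bwdM_R2 hx]
    have hs : 0 < s0 x := by
      have := keyB hx
      rw [h, abs_zero] at this; linarith
    have hmu : mu w x * s0 x = s0 x + |w| := by
      rw [mu, h, abs_zero, add_zero, div_mul_cancel₀]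
      exact ne_of_gt hs
    rw [hmu]
    have := abs_nonneg w
    calc |w| < |w| + s0 x := by linarith
    _ = s0 x + |w| := by ring
  · exact Or.inl h


/-! Inverse pair. -/

lemma left_inv_aux {A : Matrix (Fin 2) (Fin 2) ℝ} (hA : A ∈ Sset) :
    bwdM (W2 A) ![T2 A, Sig A * U2 A, Sig A * V2 A] = A := by
  set x : Fin 3 → ℝ := ![T2 A, Sig A * U2 A, Sig A * V2 A] with hxdef
  have hx0 : x 0 = T2 A := rfl
  have hx1 : x 1 = Sig A * U2 A := rfl
  have hx2 : x 2 = Sig A * V2 A := rfl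
  have hs0 : s0 x = S2 A := by
    rw [s0, hx1, hx2]
    have h1 : (Sig A * U2 A) ^ 2 + (Sig A * V2 A) ^ 2
        = Sig A ^ 2 * (U2 A ^ 2 + V2 A ^ 2) := by ring
    rw [h1, Real.sqrt_mul (sq_nonneg _), Real.sqrt_sq (sig_nonneg hA)]
    have h2 : Real.sqrt (U2 A ^ 2 + V2 A ^ 2) = R2 A := rfl
    rw [h2, sig_rho hA]
  have hmu : mu (W2 A) x * Sig A = 1 := by
    have h1 := ne_of_gt (key hA)
    have h2 := ne_of_gt (keyden hA)
    rw [mu, hs0, hx0, Sig]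
    field_simp
  ext i j
  fin_cases i <;> fin_cases j <;>
    simp only [bwdM, Matrix.cons_val_zero, Matrix.cons_val_one, Matrix.head_cons,
      Matrix.of_apply, Matrix.cons_val', Matrix.empty_val', Matrix.cons_val_fin_one,
      Matrix.head_fin_const, hx0, hx1, hx2, Fin.mk_zero, Fin.mk_one]
  · rw [show mu (W2 A) x * (Sig A * U2 A) = mu (W2 A) x * Sig A * U2 A from by ring,
      hmu, one_mul]
    unfold T2 U2; ring
  · rw [show mu (W2 A) x * (Sig A * V2 A) = mu (W2 A) x * Sig A * V2 A from by ring,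
      hmu, one_mul]
    unfold V2 W2; ring
  · rw [show mu (W2 A) x * (Sig A * V2 A) = mu (W2 A) x * Sig A * V2 A from by ring,
      hmu, one_mul]
    unfold V2 W2; ring
  · rw [show mu (W2 A) x * (Sig A * U2 A) = mu (W2 A) x * Sig A * U2 A from by ring,
      hmu, one_mul]
    unfold T2 U2; ring

lemma right_inv_aux (w : ℝ) (x : Fin 3 → ℝ) (hx : x ≠ 0) :
    W2 (bwdM w x) = w ∧
      ![T2 (bwdM w x), Sig (bwdM w x) * U2 (bwdM w x), Sig (bwdM w x) * V2 (bwdM w x)] = x := by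
  have hkB := keyB hx
  have hkBne := ne_of_gt hkB
  have hwnn := abs_nonneg w
  have hkd : 0 < s0 x + |x 0| + |w| := by linarith
  have hkdne := ne_of_gt hkd
  have hs0 : 0 ≤ s0 x := Real.sqrt_nonneg _
  have hS2 : S2 (bwdM w x) = s0 x := by
    rw [S2, bwdM_T2, bwdM_R2 hx, bwdM_W2]
    apply sc_eq _ _ _ _ hs0
    · rw [mu]; field_simp
    · rw [mu, div_mul_eq_mul_div, div_le_iff₀ hkB]
      have := abs_nonneg (x 0)
      nlinarith
  have hSig : Sig (bwdM w x) * mu w x = 1 := by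
    rw [Sig, hS2, bwdM_T2, bwdM_W2, mu]
    field_simp
  refine ⟨bwdM_W2 w x, ?_⟩
  funext i
  fin_cases i
  · simpa using bwdM_T2 w x
  · show Sig (bwdM w x) * U2 (bwdM w x) = x 1
    rw [bwdM_U2, show Sig (bwdM w x) * (mu w x * x 1)
        = Sig (bwdM w x) * mu w x * x 1 from by ring, hSig, one_mul]
  · show Sig (bwdM w x) * V2 (bwdM w x) = x 2
    rw [bwdM_V2, show Sig (bwdM w x) * (mu w x * x 2)
        = Sig (bwdM w x) * mu w x * x 2 from by ring, hSig, one_mul]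

/-! Continuity. -/

lemma cont_elem (i j : Fin 2) :
    Continuous fun A : Matrix (Fin 2) (Fin 2) ℝ => A i j :=
  continuous_id.matrix_elem i j

lemma contT2 : Continuous T2 := (cont_elem 0 0).add (cont_elem 1 1)
lemma contU2 : Continuous U2 := ((cont_elem 0 0).sub (cont_elem 1 1)).div_const 2
lemma contV2 : Continuous V2 := ((cont_elem 0 1).add (cont_elem 1 0)).div_const 2
lemma contW2 : Continuous W2 := ((cont_elem 0 1).sub (cont_elem 1 0)).div_const 2
lemma contR2 : Continuous R2 :=
  Real.continuous_sqrt.comp ((contU2.pow 2).add (contV2.pow 2))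

lemma contS2 : Continuous S2 := by
  unfold S2 sc
  apply Continuous.div_const
  apply Continuous.add
  · exact (contR2.sub contW2.abs).sub contT2.abs
  · exact Real.continuous_sqrt.comp
      ((((contR2.sub contW2.abs).sub contT2.abs).pow 2).add
        ((continuous_const.mul contR2).mul contT2.abs))

lemma conts0 : Continuous s0 := by
  unfold s0
  exact Real.continuous_sqrt.comp
    (((continuous_apply (1 : Fin 3)).pow 2).add ((continuous_apply (2 : Fin 3)).pow 2))

end Stmt19

open Stmt19 in
/-- The set `{A ∈ M₂(ℝ) : tr A ≠ 0 or det A < 0}` — the complement of the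
closed solid double cone `{tr A = 0, det A ≥ 0}` — with the subspace topology from
`M₂(ℝ) ≅ ℝ⁴`, is homeomorphic to `ℝ × (ℝ³ \ {0})`. -/
theorem stmt19 :
    Nonempty
      ((({A : Matrix (Fin 2) (Fin 2) ℝ | A.trace ≠ 0 ∨ A.det < 0}) :
          Set (Matrix (Fin 2) (Fin 2) ℝ)) ≃ₜ
        (ℝ × {x : Fin 3 → ℝ // x ≠ 0})) := by
  refine ⟨{
      toFun := fun A =>
        (W2 A.1, ⟨![T2 A.1, Sig A.1 * U2 A.1, Sig A.1 * V2 A.1], fwd_mem A.2⟩),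
      invFun := fun z => ⟨bwdM z.1 z.2.1, bwd_mem z.2.2⟩,
      left_inv := fun A => Subtype.ext (left_inv_aux A.2),
      right_inv := fun z => ?_,
      continuous_toFun := ?_,
      continuous_invFun := ?_ }⟩
  · obtain ⟨h1, h2⟩ := right_inv_aux z.1 z.2.1 z.2.2
    exact Prod.ext h1 (Subtype.ext h2)
  · apply Continuous.prodMk
    · exact contW2.comp continuous_subtype_val
    · apply Continuous.subtype_mk
      have hsig : Continuous fun A : ↥Sset => Sig A.1 := by
        apply Continuous.div
        · exact ((contS2.comp continuous_subtype_val).add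
            ((contT2.comp continuous_subtype_val).abs))
        · exact (((contS2.comp continuous_subtype_val).add
            ((contT2.comp continuous_subtype_val).abs)).add
            ((contW2.comp continuous_subtype_val).abs))
        · exact fun A => ne_of_gt (keyden A.2)
      apply continuous_pi
      intro i
      fin_cases i
      · simp; exact contT2.comp continuous_subtype_val
      · simp; exact hsig.mul (contU2.comp continuous_subtype_val)
      · simp; exact hsig.mul (contV2.comp continuous_subtype_val)
  · apply Continuous.subtype_mk
    have hx : Continuous fun z : ℝ × {x : Fin 3 → ℝ // x ≠ 0} => (z.2.1 : Fin 3 → ℝ) :=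
      continuous_subtype_val.comp continuous_snd
    have hxi : ∀ k : Fin 3,
        Continuous fun z : ℝ × {x : Fin 3 → ℝ // x ≠ 0} => z.2.1 k :=
      fun k => (continuous_apply k).comp hx
    have hw : Continuous fun z : ℝ × {x : Fin 3 → ℝ // x ≠ 0} => z.1 := continuous_fst
    have hmu : Continuous fun z : ℝ × {x : Fin 3 → ℝ // x ≠ 0} => mu z.1 z.2.1 := by
      apply Continuous.div
      · exact ((conts0.comp hx).add (hxi 0).abs).add hw.abs
      · exact (conts0.comp hx).add (hxi 0).abs
      · exact fun z => ne_of_gt (keyB z.2.2)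
    apply continuous_matrix
    intro i j
    fin_cases i <;> fin_cases j <;>
      simp only [bwdM, Matrix.cons_val_zero, Matrix.cons_val_one, Matrix.head_cons,
        Matrix.of_apply, Matrix.cons_val', Matrix.empty_val', Matrix.cons_val_fin_one,
        Matrix.head_fin_const, Fin.mk_zero, Fin.mk_one]
    · exact ((hxi 0).div_const 2).add (hmu.mul (hxi 1))
    · exact (hmu.mul (hxi 2)).add hw
    · exact (hmu.mul (hxi 2)).sub hw
    · exact ((hxi 0).div_const 2).sub (hmu.mul (hxi 1))
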